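/- For every k ∈ ℕ, every n ≥ 1 and all m_1,…,m_n ∈ ℚ, the multivariate polynomial p_k admits the alternative expression p_k(m_1,…,m_n) = Σ_{k_0,k_1,…,k_n ≥ 0, k_0+k_1+⋯+k_n = k} C(n−1, k_0) · p_{k_1}(m_1) · p_{k_2}(m_2) ⋯ p_{k_n}(m_n), where C(n−1,k_0) is the ordinary binomial coefficient. -/

import Mathlib

/-- Generalized binomial coefficient `binom(x,k) = x(x-1)⋯(x-k+1)/k!`. -/
def qbinom (x : ℚ) (k : ℕ) : ℚ := (∏ i ∈ Finset.range k, (x - i)) / (Nat.factorial k)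

/-- `p_k(m) = binom(m-1,k)·binom(m+k,k)`. -/
def pPoly (k : ℕ) (m : ℚ) : ℚ := qbinom (m - 1) k * qbinom (m + k) k

/-- `q_k(m) = binom(m,k)·binom(m+k-1,k)`. -/
def qPoly (k : ℕ) (m : ℚ) : ℚ := qbinom m k * qbinom (m + k - 1) k

/-- Multivariate `p_k(m_1,…,m_n) = Σ_{k_1+⋯+k_n=k} p_{k_1}(m_1)·q_{k_2}(m_2)⋯q_{k_n}(m_n)`. -/
def pMulti (k n : ℕ) (m : Fin n → ℚ) : ℚ :=
  ∑ f ∈ Finset.Nat.antidiagonalTuple n k,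
    ∏ i : Fin n, (if i.val = 0 then pPoly (f i) (m i) else qPoly (f i) (m i))

open Finset PowerSeries

lemma pPoly_prod (k : ℕ) (m : ℚ) :
    pPoly k m = (∏ i ∈ range k, (m ^ 2 - ((i : ℚ) + 1) ^ 2)) / ((k.factorial : ℚ))^2 := by
  unfold pPoly qbinom
  have h1 : ∏ i ∈ range k, (m + (k : ℚ) - i) = ∏ i ∈ range k, (m + 1 + i) := by
    rw [← Finset.prod_range_reflect]
    apply Finset.prod_congr rfl
    intro i hi
    rw [Finset.mem_range] at hi
    have : ((k - 1 - i : ℕ) : ℚ) = (k : ℚ) - 1 - i := by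
      have h2 : i + 1 ≤ k := hi
      push_cast [Nat.cast_sub (Nat.le_sub_of_add_le h2), Nat.cast_sub (le_trans (Nat.le_add_left 1 i) h2)]
      ring
    rw [this]; ring
  rw [h1, div_mul_div_comm, ← Finset.prod_mul_distrib]
  congr 1
  · apply Finset.prod_congr rfl; intro i _; ring
  · ring

lemma qPoly_prod (k : ℕ) (m : ℚ) :
    qPoly k m = (∏ i ∈ range k, (m ^ 2 - (i : ℚ) ^ 2)) / ((k.factorial : ℚ))^2 := by
  unfold qPoly qbinom
  have h1 : ∏ i ∈ range k, (m + (k : ℚ) - 1 - i) = ∏ i ∈ range k, (m + i) := by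
    rw [← Finset.prod_range_reflect]
    apply Finset.prod_congr rfl
    intro i hi
    rw [Finset.mem_range] at hi
    have : ((k - 1 - i : ℕ) : ℚ) = (k : ℚ) - 1 - i := by
      have h2 : i + 1 ≤ k := hi
      push_cast [Nat.cast_sub (Nat.le_sub_of_add_le h2), Nat.cast_sub (le_trans (Nat.le_add_left 1 i) h2)]
      ring
    rw [this]; ring
  rw [h1, div_mul_div_comm, ← Finset.prod_mul_distrib]
  congr 1
  · apply Finset.prod_congr rfl; intro i _; ring
  · ring

lemma pPoly_zero (m : ℚ) : pPoly 0 m = 1 := by simp [pPoly_prod]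
lemma qPoly_zero (m : ℚ) : qPoly 0 m = 1 := by simp [qPoly_prod]

lemma qPoly_succ (k : ℕ) (m : ℚ) : qPoly (k+1) m = pPoly (k+1) m + pPoly k m := by
  rw [qPoly_prod, pPoly_prod, pPoly_prod]
  rw [Finset.prod_range_succ', Finset.prod_range_succ]
  have hk : ((k.factorial : ℚ)) ≠ 0 := Nat.cast_ne_zero.mpr k.factorial_ne_zero
  have hk1 : (((k+1).factorial : ℚ)) ≠ 0 := Nat.cast_ne_zero.mpr (k+1).factorial_ne_zero
  have hfac : (((k+1).factorial : ℚ)) = ((k:ℚ)+1) * (k.factorial : ℚ) := by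
    rw [Nat.factorial_succ]; push_cast; ring
  rw [hfac]
  field_simp
  push_cast
  ring

noncomputable def Pser (m : ℚ) : ℚ⟦X⟧ := PowerSeries.mk fun k => pPoly k m
noncomputable def Qser (m : ℚ) : ℚ⟦X⟧ := PowerSeries.mk fun k => qPoly k m
noncomputable def Bser (d : ℕ) : ℚ⟦X⟧ := PowerSeries.mk fun j => (Nat.choose d j : ℚ)

lemma Qser_eq (m : ℚ) : Qser m = (1 + X) * Pser m := by
  ext n
  rw [add_mul, one_mul, map_add]
  cases n with
  | zero => simp [Qser, Pser, coeff_zero_X_mul, qPoly_zero, pPoly_zero]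
  | succ n => simp [Qser, Pser, coeff_succ_X_mul, qPoly_succ, add_comm]

lemma Bser_eq (d : ℕ) : Bser d = (1 + X) ^ d := by
  induction d with
  | zero =>
    ext n
    cases n with
    | zero => simp [Bser]
    | succ n => simp [Bser, coeff_one]
  | succ d ih =>
    rw [pow_succ, ← ih]
    ext n
    rw [mul_comm, add_mul, one_mul, map_add]
    cases n with
    | zero => simp [Bser, coeff_zero_X_mul]
    | succ n => simp [Bser, coeff_succ_X_mul, Nat.choose_succ_succ, add_comm]

lemma bridge (n k : ℕ) (F : Fin n → ℕ → ℚ) :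
    ∑ f ∈ Finset.Nat.antidiagonalTuple n k, ∏ i, F i (f i)
    = ∑ l ∈ Finset.finsuppAntidiag (Finset.univ : Finset (Fin n)) k, ∏ i, F i (l i) := by
  apply Finset.sum_nbij' (fun f => Finsupp.equivFunOnFinite.symm f)
    (fun l => (l : Fin n → ℕ))
  · intro f hf
    rw [Finset.Nat.mem_antidiagonalTuple] at hf
    rw [Finset.mem_finsuppAntidiag]
    exact ⟨hf, Finset.subset_univ _⟩
  · intro l hl
    rw [Finset.mem_finsuppAntidiag] at hl
    rw [Finset.Nat.mem_antidiagonalTuple]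
    exact hl.1
  · intro f _
    exact Finsupp.equivFunOnFinite.apply_symm_apply f
  · intro l _
    exact Finsupp.equivFunOnFinite_symm_coe l
  · intro f _
    rfl

/-- The alternative, manifestly symmetric, expression for the multivariate `p_k`:
`p_k(m_1,…,m_n) = Σ_{k_0+k_1+⋯+k_n=k} C(n-1,k_0)·p_{k_1}(m_1)⋯p_{k_n}(m_n)`. -/
theorem stmt1 (k n : ℕ) (hn : 1 ≤ n) (m : Fin n → ℚ) :
    pMulti k n m =
      ∑ g ∈ Finset.Nat.antidiagonalTuple (n + 1) k,
        (Nat.choose (n - 1) (g 0) : ℚ) * ∏ i : Fin n, pPoly (g i.succ) (m i) := by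
  obtain ⟨n', rfl⟩ : ∃ n', n = n' + 1 := ⟨n - 1, (Nat.succ_pred_eq_of_pos hn).symm⟩
  have hL : pMulti k (n'+1) m
      = PowerSeries.coeff k (∏ i : Fin (n'+1),
          if i.val = 0 then Pser (m i) else Qser (m i)) := by
    rw [pMulti, PowerSeries.coeff_prod]
    refine (bridge (n'+1) k
      (fun i j => if i.val = 0 then pPoly j (m i) else qPoly j (m i))).trans ?_
    apply Finset.sum_congr rfl
    intro l _
    apply Finset.prod_congr rfl
    intro i _
    rw [apply_ite (PowerSeries.coeff (l i))]
    simp [Pser, Qser]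
  have hR : ∑ g ∈ Finset.Nat.antidiagonalTuple (n'+1+1) k,
        (Nat.choose (n'+1-1) (g 0) : ℚ) * ∏ i : Fin (n'+1), pPoly (g i.succ) (m i)
      = PowerSeries.coeff k (∏ j : Fin (n'+2),
          Fin.cases (Bser n') (fun i => Pser (m i)) j) := by
    rw [PowerSeries.coeff_prod]
    have step : ∀ g : Fin (n'+2) → ℕ,
        (Nat.choose (n'+1-1) (g 0) : ℚ) * ∏ i : Fin (n'+1), pPoly (g i.succ) (m i)
        = ∏ j : Fin (n'+2),
            (Fin.cases (fun a => (Nat.choose n' a : ℚ))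
              (fun i a => pPoly a (m i)) j : ℕ → ℚ) (g j) := by
      intro g
      conv_rhs => rw [Fin.prod_univ_succ]
      simp
    simp_rw [step]
    refine (bridge (n'+2) k
      (fun j => Fin.cases (fun a => (Nat.choose n' a : ℚ)) (fun i a => pPoly a (m i)) j)).trans ?_
    apply Finset.sum_congr rfl
    intro l _
    apply Finset.prod_congr rfl
    intro j _
    induction j using Fin.cases with
    | zero => simp [Bser]
    | succ i => simp [Pser]
  rw [hL, hR]
  congr 1
  rw [Fin.prod_univ_succ, Fin.prod_univ_succ, Fin.prod_univ_succ]
  simp only [Fin.val_zero, Fin.val_succ, Fin.cases_zero, Fin.cases_succ,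
    Nat.succ_ne_zero, if_true, if_false, ite_true, ite_false, reduceIte]
  simp_rw [Qser_eq]
  rw [Finset.prod_mul_distrib, Finset.prod_const, Finset.card_univ, Fintype.card_fin,
    Bser_eq]
  ring
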